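/- arXiv:1009.5339 — 5 statements merged into one kernel-verified Lean document; each statement's English description precedes it below -/
import Mathlib

section
/- Let F be a field, A a finite-dimensional non-unital associative F-algebra, and V an s-dimensional F-vector space with basis e₁, …, e_s. Let θ(a,b) = Σᵢ θᵢ(a,b)eᵢ and η(a,b) = Σᵢ ηᵢ(a,b)eᵢ be cocycles with values in V, where θᵢ, ηᵢ are scalar-valued cocycles, and suppose θ^⊥ ∩ C(A) = η^⊥ ∩ C(A) = 0. Then A_θ ≅ A_η as F-algebras if and only if there exists an F-algebra automorphism φ of A such that the classes of the cocycles (a,b) ↦ ηᵢ(φ(a), φ(b)), i = 1,…,s, span the same subspace of H²(A,F) = Z²(A,F)/B²(A,F) as the classes of θ₁, …, θ_s. -/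
/-- The product on `A ⊕ V` determined by the multiplication of `A` and a
bilinear map `θ : A × A → V`:  `(a, v) · (b, w) = (ab, θ(a,b))`. -/
def extMul {F A V : Type*} [Field F]
    [NonUnitalRing A] [Module F A] [SMulCommClass F A A] [IsScalarTower F A A]
    [AddCommGroup V] [Module F V]
    (θ : A →ₗ[F] A →ₗ[F] V) (p q : A × V) : A × V :=
  (p.1 * q.1, θ p.1 q.1)

/-- The space `B²(A,F)` of scalar coboundaries: bilinear maps of the form
`(a,b) ↦ ν(ab)` for a linear map `ν : A → F`. -/
def coboundaries (F A : Type*) [Field F]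
    [NonUnitalRing A] [Module F A] [SMulCommClass F A A] [IsScalarTower F A A] :
    Submodule F (A →ₗ[F] A →ₗ[F] F) where
  carrier := {η | ∃ ν : A →ₗ[F] F, ∀ a b : A, η a b = ν (a * b)}
  add_mem' := by
    rintro x y ⟨ν, hν⟩ ⟨ν', hν'⟩
    exact ⟨ν + ν', fun a b => by simp [hν, hν']⟩
  zero_mem' := ⟨0, fun a b => by simp⟩
  smul_mem' := by
    rintro c x ⟨ν, hν⟩
    exact ⟨c • ν, fun a b => by simp [hν]⟩

set_option maxHeartbeats 2000000
set_option synthInstance.maxHeartbeats 1000000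

section Aux

variable {F A : Type*} [Field F]
    [NonUnitalRing A] [Module F A] [SMulCommClass F A A] [IsScalarTower F A A]

/-- The coboundary bilinear map associated to a linear functional. -/
noncomputable def cbd (ν : A →ₗ[F] F) : A →ₗ[F] A →ₗ[F] F :=
  (LinearMap.mul F A).compr₂ ν

lemma cbd_apply (ν : A →ₗ[F] F) (a b : A) : cbd ν a b = ν (a * b) := rfl

end Aux


set_option synthInstance.maxHeartbeats 1000000 in
set_option maxHeartbeats 1000000 in
lemma exists_matrix_of_span_eq {F : Type*} [Field F] {Q : Type*} [AddCommGroup Q] [Module F Q]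
    {s : ℕ} (f g : Fin s → Q)
    (h : Submodule.span F (Set.range f) = Submodule.span F (Set.range g)) :
    ∃ M : Matrix (Fin s) (Fin s) F, IsUnit M.det ∧ ∀ i, g i = ∑ j, M i j • f j := by
  classical
  set fh : (Fin s → F) →ₗ[F] Q := Fintype.linearCombination F f with hfh
  set gh : (Fin s → F) →ₗ[F] Q := Fintype.linearCombination F g with hgh
  have hrange : LinearMap.range gh = LinearMap.range fh := by
    rw [hfh, hgh, Fintype.range_linearCombination, Fintype.range_linearCombination, h]
  obtain ⟨C₁, hC₁⟩ := (LinearMap.ker fh).exists_isCompl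
  obtain ⟨C₂, hC₂⟩ := (LinearMap.ker gh).exists_isCompl
  have hfr : Module.finrank F (LinearMap.ker gh) = Module.finrank F (LinearMap.ker fh) := by
    have h1 := LinearMap.finrank_range_add_finrank_ker fh
    have h2 := LinearMap.finrank_range_add_finrank_ker gh
    rw [hrange] at h2; omega
  let κ : (LinearMap.ker gh) ≃ₗ[F] (LinearMap.ker fh) := LinearEquiv.ofFinrankEq _ _ hfr
  have key : ∀ (T : (Fin s → F) →ₗ[F] Q) (C : Submodule F (Fin s → F)),
      IsCompl (LinearMap.ker T) C →
      ∃ eT : C ≃ₗ[F] LinearMap.range T, ∀ c : C, (eT c : Q) = T c := by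
    intro T C hC
    set T' := (T.comp C.subtype).codRestrict (LinearMap.range T)
      (fun c => LinearMap.mem_range_self _ _) with hT'
    have hval : ∀ c : C, (T' c : Q) = T c := fun c => rfl
    have hinj : Function.Injective T' := by
      intro c c' hcc
      have h1 : T (c : Fin s → F) = T (c' : Fin s → F) := by
        have := congrArg Subtype.val hcc
        rwa [hval, hval] at this
      have h2 : ((c : Fin s → F) - c') ∈ LinearMap.ker T := by
        simp [LinearMap.mem_ker, map_sub, h1]
      have h3 : ((c : Fin s → F) - c') ∈ C := sub_mem c.2 c'.2
      have := Submodule.disjoint_def.1 hC.disjoint _ h2 h3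
      exact Subtype.ext (by rwa [sub_eq_zero] at this)
    have hsurj : Function.Surjective T' := by
      rintro ⟨y, x, rfl⟩
      obtain ⟨u, v, huv, -⟩ := Submodule.existsUnique_add_of_isCompl hC x
      refine ⟨v, Subtype.ext ?_⟩
      rw [hval]
      have hu : T (u : Fin s → F) = 0 := u.2
      rw [← huv]; simp [map_add, hu]
    exact ⟨LinearEquiv.ofBijective T' ⟨hinj, hsurj⟩, fun c => rfl⟩
  obtain ⟨eF, heF⟩ := key fh C₁ hC₁
  set σ₁ : (Fin s → F) →ₗ[F] (Fin s → F) :=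
    C₁.subtype ∘ₗ eF.symm.toLinearMap ∘ₗ
      (LinearEquiv.ofEq _ _ hrange).toLinearMap ∘ₗ gh.rangeRestrict with hσ₁
  set σ₂ : (Fin s → F) →ₗ[F] (Fin s → F) :=
    (LinearMap.ker fh).subtype ∘ₗ κ.toLinearMap ∘ₗ
      (LinearMap.ker gh).linearProjOfIsCompl C₂ hC₂ with hσ₂
  set σ := σ₁ + σ₂ with hσ
  have hσ1val : ∀ x, σ₁ x =
      ((eF.symm ((LinearEquiv.ofEq _ _ hrange) (gh.rangeRestrict x))) : Fin s → F) := fun x => rfl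
  have hfσ1 : ∀ x, fh (σ₁ x) = gh x := by
    intro x
    rw [hσ1val, ← heF, eF.apply_symm_apply]
    rfl
  have hfσ2 : ∀ x, fh (σ₂ x) = 0 := by
    intro x
    exact (κ ((LinearMap.ker gh).linearProjOfIsCompl C₂ hC₂ x)).2
  have hfσ : ∀ x, fh (σ x) = gh x := by
    intro x
    rw [hσ]; simp only [LinearMap.add_apply, map_add, hfσ1, hfσ2, add_zero]
  have hinj : Function.Injective σ := by
    rw [← LinearMap.ker_eq_bot, LinearMap.ker_eq_bot']
    intro x hx
    have hgx : gh x = 0 := by rw [← hfσ x, hx, map_zero]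
    have hσ1x : σ₁ x = 0 := by
      rw [hσ1val]
      have : gh.rangeRestrict x = 0 := Subtype.ext (by simpa using hgx)
      rw [this, map_zero, map_zero]; rfl
    have hσ2x : σ₂ x = 0 := by
      have h' := hx
      rw [hσ, LinearMap.add_apply, hσ1x, zero_add] at h'
      exact h'
    have hproj : ((LinearMap.ker gh).linearProjOfIsCompl C₂ hC₂) x = ⟨x, hgx⟩ :=
      Submodule.linearProjOfIsCompl_apply_left hC₂ ⟨x, hgx⟩
    have h0 : ((κ ⟨x, hgx⟩ : LinearMap.ker fh) : Fin s → F) = 0 := by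
      have : σ₂ x = ((κ (((LinearMap.ker gh).linearProjOfIsCompl C₂ hC₂) x) :
          LinearMap.ker fh) : Fin s → F) := rfl
      rw [this, hproj] at hσ2x
      exact hσ2x
    have hx0 : (⟨x, hgx⟩ : LinearMap.ker gh) = 0 :=
      κ.map_eq_zero_iff.mp (Subtype.ext (by simpa using h0))
    simpa using congrArg Subtype.val hx0
  have hsurjσ : Function.Surjective σ := (LinearMap.injective_iff_surjective).1 hinj
  refine ⟨fun i j => σ (Pi.single i 1) j, ?_, ?_⟩
  · have hM : (fun i j => σ (Pi.single i 1) j) = Matrix.transpose (LinearMap.toMatrix' σ) := by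
      ext i j
      rw [Matrix.transpose_apply, LinearMap.toMatrix'_apply]
    rw [hM, Matrix.det_transpose, LinearMap.det_toMatrix']
    have h1 : IsUnit (LinearMap.det ((LinearEquiv.ofBijective σ ⟨hinj, hsurjσ⟩ :
        (Fin s → F) ≃ₗ[F] (Fin s → F)).toLinearMap)) :=
      LinearEquiv.isUnit_det' _
    exact h1
  · intro i
    calc g i = gh (Pi.single i 1) := by
          rw [hgh, Fintype.linearCombination_apply_single, one_smul]
      _ = fh (σ (Pi.single i 1)) := (hfσ _).symm
      _ = ∑ j, σ (Pi.single i 1) j • f j := by rw [hfh, Fintype.linearCombination_apply]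

lemma basis_coord_sum {F V : Type*} [Field F] [AddCommGroup V] [Module F V] {s : ℕ}
    (e : Module.Basis (Fin s) F V) (c : Fin s → F) (i : Fin s) :
    e.coord i (∑ j, c j • e j) = c i := by
  classical
  rw [map_sum]
  simp [Module.Basis.coord_apply, Module.Basis.repr_self, Finsupp.single_apply, Finset.sum_ite_eq']


/-- Skjelbred–Sund isomorphism criterion.  Let `θ(a,b) = Σᵢ θᵢ(a,b)eᵢ` and
`η(a,b) = Σᵢ ηᵢ(a,b)eᵢ` be cocycles (with `θᵢ, ηᵢ` scalar cocycles and `e` a basis of `V`)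
such that `θ^⊥ ∩ C(A) = 0` and `η^⊥ ∩ C(A) = 0`.  Then `A_θ ≅ A_η` as `F`-algebras iff
there is an algebra automorphism `φ` of `A` such that the classes of the cocycles
`(a,b) ↦ ηᵢ(φ a, φ b)` span the same subspace of `H²(A,F) = Z²(A,F)/B²(A,F)` as the
classes of `θ₁, …, θ_s` (equivalently, the corresponding spans in `Z²(A,F)` agree
modulo `B²(A,F)`). -/
theorem stmt5 {F A V : Type*} [Field F]
    [NonUnitalRing A] [Module F A] [SMulCommClass F A A] [IsScalarTower F A A]
    [FiniteDimensional F A]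
    [AddCommGroup V] [Module F V] {s : ℕ} (e : Module.Basis (Fin s) F V)
    (θ η : A →ₗ[F] A →ₗ[F] V)
    (hθ : ∀ a b c : A, θ (a * b) c = θ a (b * c))
    (hη : ∀ a b c : A, η (a * b) c = η a (b * c))
    (θc ηc : Fin s → (A →ₗ[F] A →ₗ[F] F))
    (hθc : ∀ i, ∀ a b c : A, θc i (a * b) c = θc i a (b * c))
    (hηc : ∀ i, ∀ a b c : A, ηc i (a * b) c = ηc i a (b * c))
    (hθe : ∀ a b : A, θ a b = ∑ i, θc i a b • e i)
    (hηe : ∀ a b : A, η a b = ∑ i, ηc i a b • e i)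
    (hθrad : {a : A | (∀ b : A, θ a b = 0 ∧ θ b a = 0) ∧ ∀ x : A, a * x = 0 ∧ x * a = 0}
      = ({0} : Set A))
    (hηrad : {a : A | (∀ b : A, η a b = 0 ∧ η b a = 0) ∧ ∀ x : A, a * x = 0 ∧ x * a = 0}
      = ({0} : Set A)) :
    (∃ e' : (A × V) ≃ₗ[F] (A × V),
        ∀ p q : A × V, e' (extMul θ p q) = extMul η (e' p) (e' q)) ↔
      ∃ φ : A ≃ₗ[F] A, (∀ x y : A, φ (x * y) = φ x * φ y) ∧
        Submodule.span F
            (Set.range fun i => ((ηc i).comp φ.toLinearMap).compl₂ φ.toLinearMap)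
          ⊔ coboundaries F A
        = Submodule.span F (Set.range θc) ⊔ coboundaries F A := by
  classical
  constructor
  · rintro ⟨E, hE⟩
    have hEsymm : ∀ p q : A × V, E.symm (extMul η p q) = extMul θ (E.symm p) (E.symm q) := by
      intro p q
      apply E.injective
      rw [hE, E.apply_symm_apply, E.apply_symm_apply, E.apply_symm_apply]
    -- every (0, v) is mapped into {0} × V
    have haux : ∀ (G : (A × V) ≃ₗ[F] (A × V)) (ζ ξ : A →ₗ[F] A →ₗ[F] V),
        (∀ p q, G (extMul ζ p q) = extMul ξ (G p) (G q)) →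
        {a : A | (∀ b : A, ξ a b = 0 ∧ ξ b a = 0) ∧ ∀ x : A, a * x = 0 ∧ x * a = 0}
          = ({0} : Set A) →
        ∀ v : V, (G (0, v)).1 = 0 := by
      intro G ζ ξ hG hrad v
      have h0 : ∀ q : A × V, extMul ξ (G (0, v)) q = 0 := by
        intro q
        have h := hG (0, v) (G.symm q)
        have hz : extMul ζ (0, v) (G.symm q) = (0 : A × V) := by
          show ((0 : A) * _, ζ 0 _) = (0 : A × V)
          simp
        rw [hz, map_zero, G.apply_symm_apply] at h
        exact h.symm
      have h0' : ∀ q : A × V, extMul ξ q (G (0, v)) = 0 := by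
        intro q
        have h := hG (G.symm q) (0, v)
        have hz : extMul ζ (G.symm q) (0, v) = (0 : A × V) := by
          show ((G.symm q).1 * (0 : A), ζ _ 0) = (0 : A × V)
          simp
        rw [hz, map_zero, G.apply_symm_apply] at h
        exact h.symm
      have hmem : (G (0, v)).1 ∈
          {a : A | (∀ b : A, ξ a b = 0 ∧ ξ b a = 0) ∧ ∀ x : A, a * x = 0 ∧ x * a = 0} := by
        constructor
        · intro b
          exact ⟨congrArg Prod.snd (h0 (b, 0)), congrArg Prod.snd (h0' (b, 0))⟩
        · intro x
          exact ⟨congrArg Prod.fst (h0 (x, 0)), congrArg Prod.fst (h0' (x, 0))⟩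
      rw [hrad] at hmem
      simpa using hmem
    have hE0 : ∀ v, (E (0, v)).1 = 0 := haux E θ η hE hηrad
    have hE0s : ∀ v, (E.symm (0, v)).1 = 0 := haux E.symm η θ hEsymm hθrad
    set φL : A →ₗ[F] A := (LinearMap.fst F A V) ∘ₗ E.toLinearMap ∘ₗ (LinearMap.inl F A V)
      with hφL
    have hφLval : ∀ a, φL a = (E (a, 0)).1 := fun a => rfl
    have hφinj : Function.Injective φL := by
      rw [← LinearMap.ker_eq_bot, LinearMap.ker_eq_bot']
      intro a ha
      rw [hφLval] at ha
      have h1 : E (a, 0) = ((0 : A), (E (a, 0)).2) := by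
        exact Prod.ext ha rfl
      have h2 : ((a : A), (0 : V)) = E.symm (0, (E (a, 0)).2) := by
        rw [← h1, E.symm_apply_apply]
      have h3 := hE0s (E (a, 0)).2
      rw [← h2] at h3
      exact h3
    have hφsurj : Function.Surjective φL := by
      intro b
      refine ⟨(E.symm (b, 0)).1, ?_⟩
      have hp : (((E.symm (b, 0)).1 : A), (0 : V))
          = E.symm (b, 0) - ((0 : A), (E.symm (b, 0)).2) := by
        apply Prod.ext
        · simp
        · simp
      rw [hφLval, hp]
      have h4 : E.symm ((0 : A), (E.symm (b, 0)).2) = ((0:A), (E.symm ((0:A), (E.symm (b, 0)).2)).2) :=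
        Prod.ext (hE0s _) rfl
      rw [map_sub, E.apply_symm_apply]
      have h5 : (E ((0:A), (E.symm (b, 0)).2)).1 = 0 := hE0 _
      simp [h5]
    set ψL : V →ₗ[F] V := (LinearMap.snd F A V) ∘ₗ E.toLinearMap ∘ₗ (LinearMap.inr F A V)
      with hψL
    have hψLval : ∀ v, ψL v = (E (0, v)).2 := fun v => rfl
    have hψinj : Function.Injective ψL := by
      rw [← LinearMap.ker_eq_bot, LinearMap.ker_eq_bot']
      intro v hv
      rw [hψLval] at hv
      have h1 : E ((0:A), v) = 0 := Prod.ext (hE0 v) hv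
      have := congrArg Prod.snd (E.injective (h1.trans (map_zero E).symm))
      simpa using this
    have hψsurj : Function.Surjective ψL := by
      intro w
      refine ⟨(E.symm (0, w)).2, ?_⟩
      have h1 : E.symm (0, w) = ((0:A), (E.symm (0, w)).2) := Prod.ext (hE0s w) rfl
      rw [hψLval, ← h1, E.apply_symm_apply]
    set ψ : V ≃ₗ[F] V := LinearEquiv.ofBijective ψL ⟨hψinj, hψsurj⟩ with hψdef
    have hψval : ∀ v, ψ v = ψL v := fun v => rfl
    set σL : A →ₗ[F] V := (LinearMap.snd F A V) ∘ₗ E.toLinearMap ∘ₗ (LinearMap.inl F A V)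
      with hσL
    have hσLval : ∀ a, σL a = (E (a, 0)).2 := fun a => rfl
    have hkey : ∀ a b : A, φL (a * b) = φL a * φL b ∧
        η (φL a) (φL b) = σL (a * b) + ψL (θ a b) := by
      intro a b
      have h := hE (a, 0) (b, 0)
      have hl : extMul θ ((a:A), (0:V)) (b, 0) = ((a * b : A), θ a b) := by
        show ((a*b : A), θ a b) = _
        rfl
      have hsplit : ((a * b : A), θ a b) = ((a * b : A), (0 : V)) + ((0 : A), θ a b) := by
        simp
      rw [hl, hsplit, map_add] at h
      have hr : extMul η (E (a, 0)) (E (b, 0))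
          = ((E (a,0)).1 * (E (b,0)).1, η (E (a,0)).1 (E (b,0)).1) := rfl
      rw [hr] at h
      constructor
      · have h6 := congrArg Prod.fst h
        simp only [Prod.fst_add] at h6
        rw [hE0 (θ a b), add_zero] at h6
        exact h6
      · have h6 := congrArg Prod.snd h
        simp only [Prod.snd_add] at h6
        exact h6.symm
    set φ : A ≃ₗ[F] A := LinearEquiv.ofBijective φL ⟨hφinj, hφsurj⟩ with hφdef
    have hφval : ∀ a, φ a = φL a := fun a => rfl
    have hφm : ∀ x y : A, φ (x * y) = φ x * φ y := fun x y => (hkey x y).1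
    refine ⟨φ, hφm, ?_⟩
    set η' : Fin s → (A →ₗ[F] A →ₗ[F] F) :=
      fun i => ((ηc i).comp φ.toLinearMap).compl₂ φ.toLinearMap with hη'
    have hη'val : ∀ i a b, η' i a b = ηc i (φL a) (φL b) := fun i a b => rfl
    set M : Fin s → Fin s → F := fun i j => e.coord i (ψL (e j)) with hM
    set N : Fin s → Fin s → F := fun j i => e.coord j (ψ.symm (e i)) with hN
    have hθco : ∀ j (a b : A), e.coord j (θ a b) = θc j a b := by
      intro j a b
      rw [hθe]
      exact basis_coord_sum e (fun k => θc k a b) j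
    have hηco : ∀ i (a b : A), e.coord i (η (φL a) (φL b)) = ηc i (φL a) (φL b) := by
      intro i a b
      rw [hηe]
      exact basis_coord_sum e (fun k => ηc k (φL a) (φL b)) i
    -- first inclusion data
    have hdir1 : ∀ i, η' i = (∑ j, M i j • θc j) + cbd ((e.coord i).comp σL) := by
      intro i
      apply LinearMap.ext; intro a; apply LinearMap.ext; intro b
      have h1 : η' i a b = e.coord i (η (φL a) (φL b)) := (hηco i a b).symm
      rw [h1, (hkey a b).2, map_add]
      have h2 : e.coord i (ψL (θ a b)) = ∑ j, M i j * θc j a b := by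
        rw [hθe a b, map_sum, map_sum]
        apply Finset.sum_congr rfl
        intro j _
        rw [map_smul, map_smul]
        simp [hM, smul_eq_mul, mul_comm]
      rw [h2]
      simp only [LinearMap.add_apply, LinearMap.sum_apply, LinearMap.smul_apply, smul_eq_mul,
        cbd_apply, LinearMap.coe_comp, Function.comp_apply]
      ring
    -- second inclusion data
    have hθψ : ∀ a b : A, θ a b = ψ.symm (η (φL a) (φL b) - σL (a * b)) := by
      intro a b
      apply ψ.injective
      rw [ψ.apply_symm_apply, hψval, (hkey a b).2]
      abel
    have hdir2 : ∀ j, θc j = (∑ i, N j i • η' i)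
        - cbd ((e.coord j).comp (ψ.symm.toLinearMap.comp σL)) := by
      intro j
      apply LinearMap.ext; intro a; apply LinearMap.ext; intro b
      have h1 : θc j a b = e.coord j (θ a b) := (hθco j a b).symm
      rw [h1, hθψ a b, map_sub, map_sub]
      have h2 : e.coord j (ψ.symm (η (φL a) (φL b))) = ∑ i, N j i * ηc i (φL a) (φL b) := by
        rw [hηe, map_sum, map_sum]
        apply Finset.sum_congr rfl
        intro i _
        rw [map_smul, map_smul]
        simp [hN, smul_eq_mul, mul_comm]
      rw [h2]
      simp only [LinearMap.sub_apply, LinearMap.sum_apply, LinearMap.smul_apply, smul_eq_mul,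
        cbd_apply, LinearMap.coe_comp, Function.comp_apply, hη'val]
      rfl
    -- conclude span equality
    apply le_antisymm
    · apply sup_le
      · rw [Submodule.span_le]
        rintro _ ⟨i, rfl⟩
        rw [hdir1 i]
        refine add_mem (Submodule.mem_sup_left ?_) (Submodule.mem_sup_right ?_)
        · exact Submodule.sum_mem _ fun j _ =>
            Submodule.smul_mem _ _ (Submodule.subset_span ⟨j, rfl⟩)
        · exact ⟨(e.coord i).comp σL, fun a b => rfl⟩
      · exact le_sup_right
    · apply sup_le
      · rw [Submodule.span_le]
        rintro _ ⟨j, rfl⟩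
        rw [hdir2 j]
        refine Submodule.sub_mem (R := F) (M := A →ₗ[F] A →ₗ[F] F) _ (Submodule.mem_sup_left ?_) (Submodule.mem_sup_right ?_)
        · exact Submodule.sum_mem _ fun i _ =>
            Submodule.smul_mem _ _ (Submodule.subset_span ⟨i, rfl⟩)
        · exact ⟨(e.coord j).comp (ψ.symm.toLinearMap.comp σL), fun a b => rfl⟩
      · exact le_sup_right
  · rintro ⟨φ, hφm, hspan⟩
    set η' : Fin s → (A →ₗ[F] A →ₗ[F] F) :=
      fun i => ((ηc i).comp φ.toLinearMap).compl₂ φ.toLinearMap with hη'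
    set Bc := coboundaries F A with hBc
    set mk := Submodule.mkQ (R := F) (M := A →ₗ[F] A →ₗ[F] F) Bc with hmk
    have hmapB : Submodule.map mk Bc = ⊥ := by
      apply (Submodule.eq_bot_iff _).2
      rintro x ⟨y, hy, rfl⟩
      rw [hmk, Submodule.mkQ_apply]
      exact (Submodule.Quotient.mk_eq_zero _).2 hy
    have hq : Submodule.span F (Set.range (mk ∘ θc)) = Submodule.span F (Set.range (mk ∘ η')) := by
      have hh := congrArg (Submodule.map mk) hspan
      rw [Submodule.map_sup, Submodule.map_sup, hmapB, sup_bot_eq, sup_bot_eq,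
        Submodule.map_span, Submodule.map_span, ← Set.range_comp, ← Set.range_comp] at hh
      exact hh.symm
    obtain ⟨M, hMdet, hMrel⟩ := exists_matrix_of_span_eq (mk ∘ θc) (mk ∘ η') hq
    have hB : ∀ i, (η' i - ∑ j, M i j • θc j) ∈ coboundaries F A := by
      intro i
      have h0 : mk (η' i - ∑ j, M i j • θc j) = 0 := by
        rw [map_sub mk, map_sum mk]
        have h1 := hMrel i
        simp only [Function.comp_apply] at h1
        rw [h1]
        apply sub_eq_zero_of_eq
        apply Finset.sum_congr rfl
        intro j _
        rw [map_smul]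
      rw [hmk, Submodule.mkQ_apply, Submodule.Quotient.mk_eq_zero] at h0
      exact h0
    choose ν hν using fun i => hB i
    have hpoint : ∀ i (a b : A), ηc i (φ a) (φ b) = ν i (a * b) + ∑ j, M i j * θc j a b := by
      intro i a b
      have h1 := hν i a b
      simp only [LinearMap.sub_apply, LinearMap.sum_apply, LinearMap.smul_apply,
        smul_eq_mul] at h1
      have h2 : η' i a b = ηc i (φ a) (φ b) := rfl
      rw [h2] at h1
      exact sub_eq_iff_eq_add.mp h1
    have hInv : Invertible M := M.invertibleOfIsUnitDet hMdet
    set T : (Fin s → F) ≃ₗ[F] (Fin s → F) := M.toLinearEquiv' hInv with hT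
    set ψ : V ≃ₗ[F] V := (e.equivFun.trans T).trans e.equivFun.symm with hψ
    set σ₀ : A →ₗ[F] V := ∑ i, (ν i).smulRight (e i) with hσ₀
    have hσ₀val : ∀ x, σ₀ x = ∑ i, ν i x • e i := by
      intro x
      rw [hσ₀]
      simp [LinearMap.sum_apply]
    have hψθ : ∀ a b : A, ψ (θ a b) = ∑ i, (∑ j, M i j * θc j a b) • e i := by
      intro a b
      have h1 : e.equivFun (θ a b) = fun j => θc j a b := by
        rw [hθe]
        have h2 := e.equivFun_symm_apply (fun j => θc j a b)
        rw [← h2, e.equivFun.apply_symm_apply]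
      have h3 : ψ (θ a b) = e.equivFun.symm (T (e.equivFun (θ a b))) := rfl
      rw [h3, h1]
      have h4 : T (fun j => θc j a b) = M.mulVec (fun j => θc j a b) := by
        rw [hT]
        rfl
      rw [h4, e.equivFun_symm_apply]
      apply Finset.sum_congr rfl
      intro i _
      congr 1
    have hkey : ∀ a b : A, η (φ a) (φ b) = σ₀ (a * b) + ψ (θ a b) := by
      intro a b
      rw [hηe, hψθ, hσ₀val, ← Finset.sum_add_distrib]
      apply Finset.sum_congr rfl
      intro i _
      rw [hpoint i a b, add_smul]
    set Fwd : (A × V) →ₗ[F] (A × V) :=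
      (φ.toLinearMap.comp (LinearMap.fst F A V)).prod
        ((σ₀.comp (LinearMap.fst F A V)) + (ψ.toLinearMap.comp (LinearMap.snd F A V)))
      with hFwd
    set Bwd : (A × V) →ₗ[F] (A × V) :=
      (φ.symm.toLinearMap.comp (LinearMap.fst F A V)).prod
        (ψ.symm.toLinearMap.comp ((LinearMap.snd F A V)
          - σ₀.comp (φ.symm.toLinearMap.comp (LinearMap.fst F A V)))) with hBwd
    have hFval : ∀ (x : A) (w : V), Fwd (x, w) = (φ x, σ₀ x + ψ w) := fun x w => rfl
    have hBval : ∀ (x : A) (w : V), Bwd (x, w) = (φ.symm x, ψ.symm (w - σ₀ (φ.symm x))) :=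
      fun x w => rfl
    have h1 : Fwd.comp Bwd = LinearMap.id := by
      apply LinearMap.ext
      rintro ⟨a, v⟩
      rw [LinearMap.comp_apply, hBval, hFval]
      simp
    have h2 : Bwd.comp Fwd = LinearMap.id := by
      apply LinearMap.ext
      rintro ⟨a, v⟩
      rw [LinearMap.comp_apply, hFval, hBval]
      simp
    refine ⟨LinearEquiv.ofLinear Fwd Bwd h1 h2, ?_⟩
    intro p q
    show Fwd (extMul θ p q) = extMul η (Fwd p) (Fwd q)
    have hl : extMul θ p q = (p.1 * q.1, θ p.1 q.1) := rfl
    rw [hl]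
    have hp : Fwd p = (φ p.1, σ₀ p.1 + ψ p.2) := hFval p.1 p.2
    have hqq : Fwd q = (φ q.1, σ₀ q.1 + ψ q.2) := hFval q.1 q.2
    rw [hFval, hp, hqq]
    show (φ (p.1 * q.1), σ₀ (p.1 * q.1) + ψ (θ p.1 q.1))
      = (φ p.1 * φ q.1, η (φ p.1) (φ q.1))
    exact Prod.ext (hφm _ _) (hkey _ _).symm
end

section
/- Let F be a field, A a non-unital associative F-algebra, V an s-dimensional F-vector space with basis e₁, …, e_s, and θ(a,b) = Σᵢ θᵢ(a,b)eᵢ a cocycle with θ^⊥ ∩ C(A) = 0, where each θᵢ is a scalar-valued cocycle. Then the central extension A_θ has no central component if and only if the images of θ₁, …, θ_s in H²(A,F) are linearly independent. -/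
/-- Let `θ(a,b) = Σᵢ θᵢ(a,b)eᵢ` be a cocycle with `θ^⊥ ∩ C(A) = 0`, where the `θᵢ` are
scalar cocycles and `e` is a basis of `V`.  Then the central extension `A_θ` has no
central component (i.e. there is no decomposition `A_θ = I₁ ⊕ I₂` into ideals with
`I₂ ≠ 0` contained in the multiplication kernel) if and only if the images of
`θ₁, …, θ_s` in `H²(A,F) = Z²(A,F)/B²(A,F)` are linearly independent. -/
theorem stmt6 {F A V : Type*} [Field F]
    [NonUnitalRing A] [Module F A] [SMulCommClass F A A] [IsScalarTower F A A]
    [AddCommGroup V] [Module F V] {s : ℕ} (e : Module.Basis (Fin s) F V)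
    (θ : A →ₗ[F] A →ₗ[F] V)
    (hθ : ∀ a b c : A, θ (a * b) c = θ a (b * c))
    (θc : Fin s → (A →ₗ[F] A →ₗ[F] F))
    (hθc : ∀ i, ∀ a b c : A, θc i (a * b) c = θc i a (b * c))
    (hθe : ∀ a b : A, θ a b = ∑ i, θc i a b • e i)
    (hθrad : {a : A | (∀ b : A, θ a b = 0 ∧ θ b a = 0) ∧ ∀ x : A, a * x = 0 ∧ x * a = 0}
      = ({0} : Set A)) :
    (¬ ∃ I₁ I₂ : Submodule F (A × V),
        (∀ p ∈ I₁, ∀ q : A × V, extMul θ p q ∈ I₁ ∧ extMul θ q p ∈ I₁) ∧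
        (∀ p ∈ I₂, ∀ q : A × V, extMul θ p q ∈ I₂ ∧ extMul θ q p ∈ I₂) ∧
        I₂ ≠ ⊥ ∧
        (∀ p ∈ I₂, ∀ q : A × V, extMul θ p q = 0 ∧ extMul θ q p = 0) ∧
        IsCompl I₁ I₂) ↔
      ∀ c : Fin s → F, (∑ i, c i • θc i) ∈ coboundaries F A → c = 0 := by
  constructor
  · -- no decomposition → linear independence
    intro hno c hc
    by_contra hcne
    exfalso
    apply hno
    obtain ⟨ν, hν⟩ := hc
    obtain ⟨j, hj⟩ : ∃ j, c j ≠ 0 := by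
      by_contra h
      push_neg at h
      exact hcne (funext h)
    -- the functional φ on V with φ (e i) = c i
    set φ : V →ₗ[F] F := e.constr F c with hφdef
    have hφe : ∀ i, φ (e i) = c i := fun i => e.constr_basis F c i
    have hνsum : ∀ a b : A, ∑ i, c i * θc i a b = ν (a * b) := by
      intro a b
      have := hν a b
      simpa [LinearMap.sum_apply, LinearMap.smul_apply, smul_eq_mul] using this
    have hkey : ∀ a b : A, φ (θ a b) = ν (a * b) := by
      intro a b
      rw [hθe a b, map_sum]
      simp only [map_smul, hφe, smul_eq_mul]
      rw [← hνsum a b]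
      exact Finset.sum_congr rfl fun i _ => mul_comm _ _
    set L : (A × V) →ₗ[F] F :=
      φ ∘ₗ LinearMap.snd F A V - ν ∘ₗ LinearMap.fst F A V with hLdef
    have hLapp : ∀ p : A × V, L p = φ p.2 - ν p.1 := fun p => rfl
    have hprod : ∀ p q : A × V, extMul θ p q ∈ LinearMap.ker L := by
      intro p q
      rw [LinearMap.mem_ker, hLapp]
      show φ (θ p.1 q.1) - ν (p.1 * q.1) = 0
      rw [hkey, sub_self]
    set u : A × V := (0, e j) with hudef
    have hLu : L u = c j := by
      rw [hLapp]
      show φ (e j) - ν 0 = c j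
      rw [hφe, map_zero, sub_zero]
    have hspan1 : ∀ p : A × V, p ∈ Submodule.span F {u} → p.1 = 0 := by
      intro p hp
      obtain ⟨t, ht⟩ := Submodule.mem_span_singleton.mp hp
      rw [← ht]
      show t • (0 : A) = 0
      simp
    have hI₂zero : ∀ p ∈ Submodule.span F {u}, ∀ q : A × V,
        extMul θ p q = 0 ∧ extMul θ q p = 0 := by
      intro p hp q
      have h1 := hspan1 p hp
      constructor
      · show (p.1 * q.1, θ p.1 q.1) = 0
        rw [h1]
        simp [Prod.ext_iff]
      · show (q.1 * p.1, θ q.1 p.1) = 0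
        rw [h1]
        simp [Prod.ext_iff]
    refine ⟨LinearMap.ker L, Submodule.span F {u}, ?_, ?_, ?_, hI₂zero, ?_⟩
    · exact fun p _ q => ⟨hprod p q, hprod q p⟩
    · intro p hp q
      refine ⟨?_, ?_⟩
      · rw [(hI₂zero p hp q).1]; exact Submodule.zero_mem _
      · rw [(hI₂zero p hp q).2]; exact Submodule.zero_mem _
    · rw [Ne, Submodule.span_singleton_eq_bot]
      intro h
      exact e.ne_zero j (congrArg Prod.snd h)
    · constructor
      · rw [Submodule.disjoint_def]
        intro x hx hxs
        obtain ⟨t, ht⟩ := Submodule.mem_span_singleton.mp hxs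
        rw [LinearMap.mem_ker, ← ht, map_smul, hLu, smul_eq_mul] at hx
        have ht0 : t = 0 := by
          rcases mul_eq_zero.mp hx with h | h
          · exact h
          · exact absurd h hj
        rw [← ht, ht0, zero_smul]
      · rw [codisjoint_iff, eq_top_iff]
        intro x _
        have hx : x = (x - (L x / c j) • u) + (L x / c j) • u := by abel
        rw [hx]
        refine Submodule.add_mem_sup ?_ ?_
        · rw [LinearMap.mem_ker, map_sub, map_smul, hLu, smul_eq_mul,
            div_mul_cancel₀ _ hj, sub_self]
        · exact Submodule.smul_mem _ _ (Submodule.mem_span_singleton_self u)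
  · -- linear independence → no decomposition
    rintro hind ⟨I₁, I₂, hI₁, hI₂, hI₂ne, hker, hcompl⟩
    -- every element of I₂ has zero first component
    have hfst : ∀ p ∈ I₂, p.1 = 0 := by
      intro p hp
      have hset := Set.ext_iff.mp hθrad p.1
      have : p.1 ∈ ({0} : Set A) := by
        apply hset.mp
        constructor
        · intro b
          have h1 := (hker p hp (b, 0)).1
          have h2 := (hker p hp (b, 0)).2
          constructor
          · exact congrArg Prod.snd h1
          · exact congrArg Prod.snd h2
        · intro x
          have h1 := (hker p hp (x, 0)).1
          have h2 := (hker p hp (x, 0)).2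
          constructor
          · exact congrArg Prod.fst h1
          · exact congrArg Prod.fst h2
      exact this
    -- projection onto I₂ along I₁
    set π : (A × V) →ₗ[F] (A × V) :=
      I₂.subtype ∘ₗ I₂.projectionOnto I₁ hcompl.symm with hπdef
    have hπmem : ∀ x : A × V, π x ∈ I₂ := fun x => (I₂.projectionOnto I₁ hcompl.symm x).2
    have hπI₁ : ∀ x ∈ I₁, π x = 0 := by
      intro x hx
      show (I₂.subtype) (I₂.projectionOnto I₁ hcompl.symm x) = 0
      rw [Submodule.projectionOnto_apply_of_mem_right hcompl.symm hx]
      rfl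
    have hπI₂ : ∀ x ∈ I₂, π x = x := by
      intro x hx
      show (I₂.subtype) (I₂.projectionOnto I₁ hcompl.symm x) = x
      rw [Submodule.projectionOnto_apply_left hcompl.symm ⟨x, hx⟩]
      rfl
    have hsub : ∀ x : A × V, x - π x ∈ I₁ := by
      intro x
      have h := Submodule.projection_add_projection_eq_self hcompl x
      have : x - π x = (I₁.projectionOnto I₂ hcompl x : A × V) := by
        show x - (I₂.projectionOnto I₁ hcompl.symm x : A × V) = _
        exact sub_eq_of_eq_add h.symm
      rw [this]
      exact (I₁.projectionOnto I₂ hcompl x).2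
    -- all products lie in I₁
    have hprodI₁ : ∀ p q : A × V, extMul θ p q ∈ I₁ := by
      intro p q
      have h1 : extMul θ p q = extMul θ (p - π p) (q - π q) := by
        have hp1 : (p - π p).1 = p.1 := by
          show p.1 - (π p).1 = p.1
          rw [hfst _ (hπmem p), sub_zero]
        have hq1 : (q - π q).1 = q.1 := by
          show q.1 - (π q).1 = q.1
          rw [hfst _ (hπmem q), sub_zero]
        unfold extMul
        rw [hp1, hq1]
      rw [h1]
      exact (hI₁ _ (hsub p) _).1
    have hπprod : ∀ a b : A, π (a * b, θ a b) = 0 := by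
      intro a b
      have : ((a * b, θ a b) : A × V) = extMul θ (a, 0) (b, 0) := rfl
      rw [this]
      exact hπI₁ _ (hprodI₁ _ _)
    -- pick a nonzero element of I₂ and a dual functional
    obtain ⟨w0, hw0mem, hw0ne⟩ := Submodule.exists_mem_ne_zero_of_ne_bot hI₂ne
    obtain ⟨φ, hφ⟩ : ∃ φ : Module.Dual F (A × V), φ w0 ≠ 0 := by
      by_contra h
      push_neg at h
      exact hw0ne ((Module.forall_dual_apply_eq_zero_iff F w0).mp h)
    set ψ : (A × V) →ₗ[F] F := φ ∘ₗ π with hψdef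
    set c : Fin s → F := fun i => ψ (0, e i) with hcdef
    set ν : A →ₗ[F] F := -(ψ ∘ₗ LinearMap.inl F A V) with hνdef
    have hco : (∑ i, c i • θc i) ∈ coboundaries F A := by
      refine ⟨ν, fun a b => ?_⟩
      have h0 : ψ (a * b, θ a b) = 0 := by
        show φ (π (a * b, θ a b)) = 0
        rw [hπprod, map_zero]
      have hsplit : ((a * b, θ a b) : A × V) = (a * b, 0) + (0, θ a b) := by
        simp
      rw [hsplit, map_add] at h0
      have h2 : ψ (0, θ a b) = ∑ i, θc i a b * c i := by
        have : ψ (0, θ a b) = (ψ ∘ₗ LinearMap.inr F A V) (θ a b) := rfl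
        rw [this, hθe a b, map_sum]
        refine Finset.sum_congr rfl fun i _ => ?_
        rw [map_smul]
        rfl
      have hν1 : ν (a * b) = -ψ (a * b, 0) := rfl
      have : (∑ i, c i • θc i) a b = ∑ i, c i * θc i a b := by
        simp [LinearMap.sum_apply, LinearMap.smul_apply, smul_eq_mul]
      rw [this, hν1]
      rw [h2] at h0
      have := eq_neg_of_add_eq_zero_right h0
      rw [← this]
      exact Finset.sum_congr rfl fun i _ => mul_comm _ _
    have hc0 : c = 0 := hind c hco
    -- derive the contradiction
    have hψV : ∀ v : V, ψ (0, v) = 0 := by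
      have hmap : (ψ ∘ₗ LinearMap.inr F A V) = 0 := by
        apply e.ext
        intro i
        have : (ψ ∘ₗ LinearMap.inr F A V) (e i) = c i := rfl
        rw [this, hc0]
        rfl
      intro v
      have : ψ (0, v) = (ψ ∘ₗ LinearMap.inr F A V) v := rfl
      rw [this, hmap]
      rfl
    have hw0fst : w0.1 = 0 := hfst w0 hw0mem
    have hw0eq : w0 = ((0, w0.2) : A × V) := by
      rw [← hw0fst]
    have : ψ w0 = φ w0 := by
      show φ (π w0) = φ w0
      rw [hπI₂ w0 hw0mem]
    apply hφ
    rw [← this, hw0eq, hψV]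
end

section
/- Let F be a field. Every 2-dimensional nilpotent non-unital associative F-algebra is isomorphic to exactly one of: (i) the 2-dimensional algebra with identically zero multiplication, or (ii) the algebra with basis a, b and multiplication determined by a² = b (all other products of basis elements zero). These two algebras are not isomorphic. -/
/-- A (non-unital) algebra is nilpotent if there is `n ≥ 1` such that every product of
`n` elements is zero. -/
def AlgNilpotent (A : Type*) [Mul A] [Zero A] : Prop :=
  ∃ n : ℕ, 0 < n ∧ ∀ (x : A) (l : List A), l.length + 1 = n → l.foldl (· * ·) x = 0

/-- The multiplication table `a² = b` (all other products of the basis elements zero). -/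
def IsA22Basis {F A : Type*} [Field F] [NonUnitalRing A] [Module F A]
    (v : Module.Basis (Fin 2) F A) : Prop :=
  v 0 * v 0 = v 1 ∧ v 0 * v 1 = 0 ∧ v 1 * v 0 = 0 ∧ v 1 * v 1 = 0

section Aux

variable {F A : Type*} [Field F] [NonUnitalRing A] [Module F A]
    [SMulCommClass F A A] [IsScalarTower F A A]

lemma aux_span_top {a b : A} (hA : Module.finrank F A = 2)
    (hli : LinearIndependent F ![a, b]) : Submodule.span F {a, b} = ⊤ := by
  have hcard : Fintype.card (Fin 2) = Module.finrank F A := by simp [hA]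
  have h := (basisOfLinearIndependentOfCardEqFinrank hli hcard).span_eq
  rw [coe_basisOfLinearIndependentOfCardEqFinrank] at h
  have hr : Set.range ![a, b] = {a, b} := by
    ext z; simp [Fin.exists_fin_two, or_comm]
  rwa [hr] at h

lemma exists_sq_ne_zero (hA : Module.finrank F A = 2) (x y : A) (hxy : x * y ≠ 0) :
    ∃ a : A, a * a ≠ 0 := by
  by_cases hx : x * x = 0
  · by_cases hy : y * y = 0
    · by_cases hs : (x + y) * (x + y) = 0
      · exfalso
        have hx0 : x ≠ 0 := fun h => hxy (by simp [h])
        have hli : LinearIndependent F ![x, y] := by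
          rw [LinearIndependent.pair_iff]
          intro s t hst
          by_cases ht : t = 0
          · subst ht
            rw [zero_smul, add_zero] at hst
            rcases smul_eq_zero.mp hst with h | h
            · exact ⟨h, rfl⟩
            · exact absurd h hx0
          · exfalso
            have hyx : y = (-s/t) • x := by
              have h1 : t • y = -(s • x) := eq_neg_of_add_eq_zero_right hst
              have : y = t⁻¹ • (t • y) := by
                rw [smul_smul, inv_mul_cancel₀ ht, one_smul]
              rw [this, h1, smul_neg, smul_smul, ← neg_smul, neg_div, div_eq_inv_mul]
            apply hxy
            rw [hyx, mul_smul_comm, hx, smul_zero]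
        have htop := aux_span_top hA hli
        obtain ⟨γ, δ, hc⟩ := Submodule.mem_span_pair.mp
          (show x * y ∈ Submodule.span F {x, y} by rw [htop]; trivial)
        have h1 : x * (x * y) = 0 := by rw [← mul_assoc, hx, zero_mul]
        have h2 : (x * y) * y = 0 := by rw [mul_assoc, hy, mul_zero]
        rw [← hc, mul_add, mul_smul_comm, mul_smul_comm, hx, smul_zero, zero_add] at h1
        rw [← hc, add_mul, smul_mul_assoc, smul_mul_assoc, hy, smul_zero, add_zero] at h2
        have hδ : δ = 0 := by
          rcases smul_eq_zero.mp h1 with h | h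
          · exact h
          · exact absurd h hxy
        have hγ : γ = 0 := by
          rcases smul_eq_zero.mp h2 with h | h
          · exact h
          · exact absurd h hxy
        rw [hγ, hδ, zero_smul, zero_smul, add_zero] at hc
        exact hxy hc.symm
      · exact ⟨x + y, hs⟩
    · exact ⟨y, hy⟩
  · exact ⟨x, hx⟩

lemma main_basis (hA : Module.finrank F A = 2) (hAnil : AlgNilpotent A)
    (a : A) (ha : a * a ≠ 0) : ∃ v : Module.Basis (Fin 2) F A, IsA22Basis v := by
  obtain ⟨n, hn, hnil⟩ := hAnil
  set q : ℕ → A := fun k => (· * a)^[k] a with hqdef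
  have hq0 : q 0 = a := rfl
  have hqs : ∀ k, q (k + 1) = q k * a := fun k => Function.iterate_succ_apply' _ _ _
  have haq : ∀ k, a * q k = q (k + 1) := by
    intro k
    induction k with
    | zero => rw [hq0, hqs 0, hq0]
    | succ k ih =>
      calc a * q (k + 1) = a * (q k * a) := by rw [hqs]
        _ = (a * q k) * a := (mul_assoc _ _ _).symm
        _ = q (k + 1) * a := by rw [ih]
        _ = q (k + 2) := (hqs _).symm
  have ha0 : a ≠ 0 := fun h => ha (by simp [h])
  have hn2 : 2 ≤ n := by
    by_contra h
    have hn1 : n = 1 := by omega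
    subst hn1
    exact ha0 (hnil a [] rfl)
  have hfold : ∀ k (x : A), List.foldl (· * ·) x (List.replicate k a) = (· * a)^[k] x := by
    intro k
    induction k with
    | zero => intro x; rfl
    | succ k ih =>
      intro x
      rw [List.replicate_succ, List.foldl_cons, ih, Function.iterate_succ_apply]
  have hz : ∀ k, q (n - 1 + k) = 0 := by
    intro k
    induction k with
    | zero =>
      have h := hnil a (List.replicate (n - 1) a)
        (by rw [List.length_replicate]; omega)
      rw [hfold] at h
      exact h
    | succ k ih =>
      show q ((n - 1 + k) + 1) = 0
      rw [hqs, ih, zero_mul]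
  have hq1ne : q 1 ≠ 0 := by rw [hqs 0, hq0]; exact ha
  have geom : ∀ μ : F, q 2 = μ • q 1 → μ = 0 := by
    intro μ h2
    have hpow : ∀ k, q (k + 1) = μ ^ k • q 1 := by
      intro k
      induction k with
      | zero => rw [pow_zero, one_smul]
      | succ k ih =>
        calc q (k + 2) = a * q (k + 1) := (haq _).symm
          _ = a * (μ ^ k • q 1) := by rw [ih]
          _ = μ ^ k • (a * q 1) := mul_smul_comm _ _ _
          _ = μ ^ k • q 2 := by rw [haq]
          _ = μ ^ k • (μ • q 1) := by rw [h2]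
          _ = μ ^ (k + 1) • q 1 := by rw [smul_smul, ← pow_succ]
    have hzn : q ((n - 1) + 1) = 0 := hz 1
    rw [hpow (n - 1)] at hzn
    rcases smul_eq_zero.mp hzn with h | h
    · exact pow_eq_zero_iff (by omega) |>.mp h
    · exact absurd h hq1ne
  set b := a * a with hb
  have hq1 : q 1 = b := by rw [hqs 0, hq0]
  have hq2ab : q 2 = a * b := by rw [← haq 1, hq1]
  have hq2ba : q 2 = b * a := by rw [hqs 1, hq1]
  have hli : LinearIndependent F ![a, b] := by
    rw [LinearIndependent.pair_iff]
    intro s t hst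
    by_cases ht : t = 0
    · subst ht
      rw [zero_smul, add_zero] at hst
      rcases smul_eq_zero.mp hst with h | h
      · exact ⟨h, rfl⟩
      · exact absurd h ha0
    · exfalso
      have hba : b = (-s/t) • a := by
        have h1 : t • b = -(s • a) := eq_neg_of_add_eq_zero_right hst
        have h2 : b = t⁻¹ • (t • b) := by
          rw [smul_smul, inv_mul_cancel₀ ht, one_smul]
        rw [h2, h1, smul_neg, smul_smul, ← neg_smul, neg_div, div_eq_inv_mul]
      have h2 : q 2 = (-s/t) • q 1 := by
        rw [hq2ab, hq1]
        nth_rewrite 1 [hba]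
        rw [mul_smul_comm, ← hb]
      have hμ := geom _ h2
      rw [hμ, zero_smul] at hba
      exact hq1ne (by rw [hq1, hba])
  have hcard : Fintype.card (Fin 2) = Module.finrank F A := by simp [hA]
  refine ⟨basisOfLinearIndependentOfCardEqFinrank hli hcard, ?_⟩
  have hv : ⇑(basisOfLinearIndependentOfCardEqFinrank hli hcard) = ![a, b] :=
    coe_basisOfLinearIndependentOfCardEqFinrank hli hcard
  have htop := aux_span_top hA hli
  obtain ⟨α, β, hαβ⟩ := Submodule.mem_span_pair.mp
    (show a * b ∈ Submodule.span F {a, b} by rw [htop]; trivial)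
  -- hαβ : α • a + β • b = a * b
  have hα : α = 0 := by
    by_contra hα
    -- a = e • q 1 + f • q 2  with e = -(β/α), f = α⁻¹
    have ha_eq : a = (-(β/α)) • q 1 + α⁻¹ • q 2 := by
      have hq2e : q 2 = α • a + β • q 1 := by rw [hq2ab, ← hαβ, hq1]
      rw [hq2e]
      match_scalars <;> field_simp <;> ring
    have key : ∀ k, q k = (-(β/α)) • q (k + 1) + α⁻¹ • q (k + 2) := by
      intro k
      induction k with
      | zero => rw [hq0]; exact ha_eq
      | succ k ih =>
        calc q (k + 1) = a * q k := (haq _).symm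
          _ = a * ((-(β/α)) • q (k + 1) + α⁻¹ • q (k + 2)) := by rw [← ih]
          _ = (-(β/α)) • (a * q (k + 1)) + α⁻¹ • (a * q (k + 2)) := by
              rw [mul_add, mul_smul_comm, mul_smul_comm]
          _ = (-(β/α)) • q (k + 2) + α⁻¹ • q (k + 3) := by rw [haq, haq]
    have key2 : ∀ k, ∃ c d : F, a = c • q k + d • q (k + 1) := by
      intro k
      induction k with
      | zero => exact ⟨1, 0, by rw [hq0, one_smul, zero_smul, add_zero]⟩
      | succ k ih =>
        obtain ⟨c, d, hcd⟩ := ih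
        refine ⟨c * (-(β/α)) + d, c * α⁻¹, ?_⟩
        show a = (c * (-(β/α)) + d) • q (k + 1) + (c * α⁻¹) • q (k + 2)
        rw [hcd, key k]
        module
    obtain ⟨c, d, hcd⟩ := key2 (n - 1)
    have h1 : q (n - 1) = 0 := hz 0
    have h2 : q (n - 1 + 1) = 0 := hz 1
    rw [h1, h2, smul_zero, smul_zero, add_zero] at hcd
    exact ha0 hcd
  rw [hα, zero_smul, zero_add] at hαβ
  -- hαβ : β • b = a * b,  i.e. q 2 = β • q 1
  have hβ := geom β (by rw [hq2ab, ← hαβ, hq1])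
  rw [hβ, zero_smul] at hαβ
  -- hαβ : 0 = a * b
  have hab : a * b = 0 := hαβ.symm
  have hba2 : b * a = 0 := by rw [← hq2ba, hq2ab, hab]
  have hbb : b * b = 0 := by
    nth_rewrite 1 [hb]
    rw [mul_assoc, hab, mul_zero]
  refine ⟨?_, ?_, ?_, ?_⟩ <;>
      simp only [hv, Matrix.cons_val_zero, Matrix.cons_val_one, Matrix.head_cons] <;>
    first
      | exact hb.symm
      | exact hab
      | exact hba2
      | exact hbb

end Aux

/-- Every 2-dimensional nilpotent non-unital associative algebra over a field `F` is
isomorphic to exactly one of: (i) the algebra with zero multiplication, (ii) the algebra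
with basis `a, b` and only nonzero product `a² = b`; and these two are not isomorphic. -/
theorem stmt8 {F A A' : Type*} [Field F]
    [NonUnitalRing A] [Module F A] [SMulCommClass F A A] [IsScalarTower F A A]
    [NonUnitalRing A'] [Module F A'] [SMulCommClass F A' A'] [IsScalarTower F A' A']
    (hA : Module.finrank F A = 2) (hAnil : AlgNilpotent A)
    (hA' : Module.finrank F A' = 2) (hA'nil : AlgNilpotent A') :
    (∃ v : Module.Basis (Fin 2) F A, (∀ x y : A, x * y = 0) ∨ IsA22Basis v) ∧
      ((∀ x y : A, x * y = 0) → (∃ w : Module.Basis (Fin 2) F A', IsA22Basis w) →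
        ¬ ∃ e : A ≃ₗ[F] A', ∀ x y : A, e (x * y) = e x * e y) := by
  constructor
  · by_cases hz : ∀ x y : A, x * y = 0
    · have : Module.Finite F A := Module.finite_of_finrank_pos (by rw [hA]; norm_num)
      exact ⟨Module.finBasisOfFinrankEq F A hA, Or.inl hz⟩
    · push_neg at hz
      obtain ⟨x, y, hxy⟩ := hz
      obtain ⟨a, ha⟩ := exists_sq_ne_zero hA x y hxy
      obtain ⟨v, hv⟩ := main_basis hA hAnil a ha
      exact ⟨v, Or.inr hv⟩
  · rintro hzero ⟨w, hw⟩ ⟨e, he⟩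
    have h1 : w 0 * w 0 = 0 := by
      calc w 0 * w 0 = e (e.symm (w 0)) * e (e.symm (w 0)) := by
            rw [e.apply_symm_apply]
        _ = e (e.symm (w 0) * e.symm (w 0)) := (he _ _).symm
        _ = e 0 := by rw [hzero]
        _ = 0 := map_zero e
    rw [hw.1] at h1
    exact w.ne_zero 1 h1
end

section
/- Let F be a field and for α ∈ F with α ≠ 0 let A_{3,3}^α be the 3-dimensional non-unital associative F-algebra with basis a, b, c and nonzero products a² = αc, b² = c. Then for nonzero α, β ∈ F, the algebras A_{3,3}^α and A_{3,3}^β are isomorphic if and only if there exists ε ∈ F with ε ≠ 0 and α = ε²β. -/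
/-- The multiplication table of `A_{3,3}^α` on a basis `a = v 0`, `b = v 1`, `c = v 2`:
`a² = αc`, `b² = c`, and all other products of basis elements zero. -/
def IsA33Basis {F A : Type*} [Field F] [NonUnitalRing A] [Module F A]
    (α : F) (v : Module.Basis (Fin 3) F A) : Prop :=
  v 0 * v 0 = α • v 2 ∧ v 1 * v 1 = v 2 ∧
  v 0 * v 1 = 0 ∧ v 1 * v 0 = 0 ∧ v 0 * v 2 = 0 ∧ v 2 * v 0 = 0 ∧
  v 1 * v 2 = 0 ∧ v 2 * v 1 = 0 ∧ v 2 * v 2 = 0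

lemma mulf {F B : Type*} [Field F] [NonUnitalRing B] [Module F B]
    [SMulCommClass F B B] [IsScalarTower F B B] {β : F} {w : Module.Basis (Fin 3) F B}
    (hw : IsA33Basis β w) (x y : B) :
    x * y = ((w.repr x 0 * w.repr y 0) * β + w.repr x 1 * w.repr y 1) • w 2 := by
  obtain ⟨h1,h2,h3,h4,h5,h6,h7,h8,h9⟩ := hw
  conv_lhs => rw [← w.sum_repr x, ← w.sum_repr y]
  rw [Finset.sum_mul_sum]
  simp [Fin.sum_univ_three, smul_mul_assoc, mul_smul_comm, h1,h2,h3,h4,h5,h6,h7,h8,h9,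
    smul_smul, add_smul, mul_comm, mul_left_comm]

/-- For nonzero `α, β ∈ F`, the algebras `A_{3,3}^α` and `A_{3,3}^β` are isomorphic
if and only if there exists `ε ∈ F`, `ε ≠ 0`, with `α = ε²β`. -/
theorem stmt9 {F A B : Type*} [Field F]
    [NonUnitalRing A] [Module F A] [SMulCommClass F A A] [IsScalarTower F A A]
    [NonUnitalRing B] [Module F B] [SMulCommClass F B B] [IsScalarTower F B B]
    {α β : F} (hα : α ≠ 0) (hβ : β ≠ 0)
    (v : Module.Basis (Fin 3) F A) (w : Module.Basis (Fin 3) F B)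
    (hv : IsA33Basis α v) (hw : IsA33Basis β w) :
    (∃ e : A ≃ₗ[F] B, ∀ x y : A, e (x * y) = e x * e y) ↔
      ∃ ε : F, ε ≠ 0 ∧ α = ε ^ 2 * β := by
  constructor
  · rintro ⟨e, he⟩
    set p0 : F := w.repr (e (v 0)) 0 with hp0
    set p1 : F := w.repr (e (v 0)) 1 with hp1
    set q0 : F := w.repr (e (v 1)) 0 with hq0
    set q1 : F := w.repr (e (v 1)) 1 with hq1
    have hw2 : w 2 ≠ 0 := w.ne_zero 2
    have smul_inj : ∀ c d : F, c • w 2 = d • w 2 → c = d := by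
      intro c d h
      have h' : (c - d) • w 2 = 0 := by rw [sub_smul, h, sub_self]
      rcases smul_eq_zero.mp h' with h'' | h''
      · exact sub_eq_zero.mp h''
      · exact absurd h'' hw2
    -- e (v 2) = λ • w 2
    have hc : e (v 2) = (q0 * q0 * β + q1 * q1) • w 2 := by
      have := he (v 1) (v 1)
      rw [hv.2.1, mulf hw] at this
      rw [this]
    set lam : F := q0 * q0 * β + q1 * q1 with hlam
    -- lam ≠ 0
    have hlamne : lam ≠ 0 := by
      intro h
      have : e (v 2) = 0 := by rw [hc, h, zero_smul]
      have : v 2 = 0 := by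
        have := e.map_eq_zero_iff.mp this
        exact this
      exact v.ne_zero 2 this
    -- α * lam = p0² β + p1²
    have h1 : α * lam = p0 * p0 * β + p1 * p1 := by
      have h := he (v 0) (v 0)
      rw [hv.1, map_smul, hc, mulf hw] at h
      rw [smul_smul] at h
      exact smul_inj _ _ h
    -- p0 q0 β + p1 q1 = 0
    have h2 : p0 * q0 * β + p1 * q1 = 0 := by
      have h := he (v 0) (v 1)
      rw [hv.2.2.1, map_zero, mulf hw] at h
      have := smul_inj 0 (p0 * q0 * β + p1 * q1) (by rw [← h, zero_smul])
      exact this.symm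
    refine ⟨(p0 * q1 - p1 * q0) / lam, ?_, ?_⟩
    · intro h
      apply hα
      rw [div_eq_zero_iff] at h
      rcases h with h | h
      · -- p0 q1 - p1 q0 = 0 ⇒ α lam² = 0
        have key : α * lam ^ 2 = (p0 * q1 - p1 * q0) ^ 2 * β := by
          linear_combination lam * h1 + (p0 * p0 * β + p1 * p1) * hlam +
            (p0 * q0 * β + p1 * q1) * h2
        have : α * lam ^ 2 = 0 := by rw [key, h]; ring
        have := mul_eq_zero.mp this
        rcases this with h' | h'
        · exact h'
        · exact absurd (pow_eq_zero_iff (by norm_num) |>.mp h') hlamne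
      · exact absurd h hlamne
    · have key : α * lam ^ 2 = (p0 * q1 - p1 * q0) ^ 2 * β := by
        linear_combination lam * h1 + (p0 * p0 * β + p1 * p1) * hlam +
          (p0 * q0 * β + p1 * q1) * h2
      field_simp
      linear_combination key
  · rintro ⟨ε, hε, hαβ⟩
    set u : Fin 3 → Fˣ := ![Units.mk0 ε hε, 1, 1] with hu
    set w' : Module.Basis (Fin 3) F B := w.unitsSMul u with hw'
    set e : A ≃ₗ[F] B := v.equiv w' (Equiv.refl _) with he
    have hei : ∀ i, e (v i) = (u i : F) • w i := by
      intro i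
      rw [he, Module.Basis.equiv_apply, hw', Module.Basis.unitsSMul_apply]
      rfl
    have key : ∀ i j, e (v i * v j) = e (v i) * e (v j) := by
      intro i j
      fin_cases i <;> fin_cases j <;>
        simp only [Fin.zero_eta, Fin.mk_one, Fin.reduceFinMk,
          hv.1, hv.2.1, hv.2.2.1, hv.2.2.2.1, hv.2.2.2.2.1, hv.2.2.2.2.2.1,
          hv.2.2.2.2.2.2.1, hv.2.2.2.2.2.2.2.1, hv.2.2.2.2.2.2.2.2,
          map_zero, map_smul, hei, hu, Matrix.cons_val_zero, Matrix.cons_val_one,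
          Matrix.head_cons, Matrix.cons_val_two, Matrix.tail_cons,
          Units.val_mk0, Units.val_one, one_smul, smul_mul_assoc, mul_smul_comm,
          smul_smul, mul_zero, zero_mul, smul_zero,
          hw.1, hw.2.1, hw.2.2.1, hw.2.2.2.1, hw.2.2.2.2.1, hw.2.2.2.2.2.1,
          hw.2.2.2.2.2.2.1, hw.2.2.2.2.2.2.2.1, hw.2.2.2.2.2.2.2.2] <;>
        first
          | rfl
          | (congr 1; rw [hαβ]; ring)
    refine ⟨e, fun x y => ?_⟩
    have hmap : LinearMap.compr₂ (LinearMap.mul F A) e.toLinearMap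
        = LinearMap.compl₁₂ (LinearMap.mul F B) e.toLinearMap e.toLinearMap := by
      refine v.ext fun i => v.ext fun j => ?_
      simpa using key i j
    have h := DFunLike.congr_fun (DFunLike.congr_fun hmap x) y
    simpa using h
end

section
/- Let F be a field of characteristic different from 2 and for α ∈ F let A_{4,5}^α be the 4-dimensional commutative non-unital associative F-algebra with basis a, b, c, d and nonzero products a² = −αc, ab = ba = d, b² = c. Then for α, β ∈ F, the algebras A_{4,5}^α and A_{4,5}^β are isomorphic if and only if there exists ε ∈ F with ε ≠ 0 and α = ε²β. -/
/-- The multiplication table of `A_{4,5}^α` on a basis `a = v 0`, `b = v 1`, `c = v 2`,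
`d = v 3`: `a² = -αc`, `ab = ba = d`, `b² = c`, all other products of basis elements
zero. -/
def IsA45Basis {F A : Type*} [Field F] [NonUnitalRing A] [Module F A]
    (α : F) (v : Module.Basis (Fin 4) F A) : Prop :=
  v 0 * v 0 = (-α) • v 2 ∧ v 0 * v 1 = v 3 ∧ v 1 * v 0 = v 3 ∧ v 1 * v 1 = v 2 ∧
  v 0 * v 2 = 0 ∧ v 0 * v 3 = 0 ∧ v 1 * v 2 = 0 ∧ v 1 * v 3 = 0 ∧
  v 2 * v 0 = 0 ∧ v 2 * v 1 = 0 ∧ v 2 * v 2 = 0 ∧ v 2 * v 3 = 0 ∧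
  v 3 * v 0 = 0 ∧ v 3 * v 1 = 0 ∧ v 3 * v 2 = 0 ∧ v 3 * v 3 = 0

set_option maxHeartbeats 1000000 in
lemma det4 {R : Type*} [CommRing R] (a b c d e f g h i j k l : R) :
    Matrix.det !![a, b, 0, 0; c, d, 0, 0; e, f, g, h; i, j, k, l] =
      (a * d - b * c) * (g * l - h * k) := by
  simp [Matrix.det_succ_row_zero, Fin.sum_univ_succ, Fin.succAbove]
  ring



lemma key_expand {F B : Type*} [Field F] [NonUnitalRing B] [Module F B]
    [SMulCommClass F B B] [IsScalarTower F B B] (β : F) (w : Module.Basis (Fin 4) F B)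
    (hw : IsA45Basis β w) (x y : B) :
    x * y = (w.repr x 1 * w.repr y 1 - β * (w.repr x 0 * w.repr y 0)) • w 2 +
      (w.repr x 0 * w.repr y 1 + w.repr x 1 * w.repr y 0) • w 3 := by
  obtain ⟨h00,h01,h10,h11,h02,h03,h12,h13,h20,h21,h22,h23,h30,h31,h32,h33⟩ := hw
  conv_lhs => rw [← w.sum_repr x, ← w.sum_repr y]
  rw [Fin.sum_univ_four, Fin.sum_univ_four]
  simp only [add_mul, mul_add, smul_mul_assoc, mul_smul_comm,
    h00,h01,h10,h11,h02,h03,h12,h13,h20,h21,h22,h23,h30,h31,h32,h33,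
    smul_zero, add_zero, zero_add]
  module


set_option maxHeartbeats 1000000 in
lemma fwd {F A B : Type*} [Field F] (hchar : (2 : F) ≠ 0)
    [NonUnitalRing A] [Module F A] [SMulCommClass F A A] [IsScalarTower F A A]
    [NonUnitalRing B] [Module F B] [SMulCommClass F B B] [IsScalarTower F B B]
    (α β : F) (v : Module.Basis (Fin 4) F A) (w : Module.Basis (Fin 4) F B)
    (hv : IsA45Basis α v) (hw : IsA45Basis β w)
    (e : A ≃ₗ[F] B) (he : ∀ x y : A, e (x * y) = e x * e y) :
    ∃ ε : F, ε ≠ 0 ∧ α = ε ^ 2 * β := by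
  set p : F := w.repr (e (v 0)) 0 with hp
  set q : F := w.repr (e (v 0)) 1 with hq
  set r : F := w.repr (e (v 1)) 0 with hr
  set s : F := w.repr (e (v 1)) 1 with hs
  clear_value p q r s
  -- images of v2, v3
  have h2 : e (v 2) = (s * s - β * (r * r)) • w 2 + (r * s + s * r) • w 3 := by
    rw [← hv.2.2.2.1, he, key_expand β w hw, hr, hs]
  have h3 : e (v 3) = (q * s - β * (p * r)) • w 2 + (p * s + q * r) • w 3 := by
    rw [← hv.2.1, he, key_expand β w hw, hp, hq, hr, hs]
  have h0 : (-α) • e (v 2) = (q * q - β * (p * p)) • w 2 + (q * p + p * q) • w 3 := by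
    rw [← map_smul, ← hv.1, he, key_expand β w hw, hp, hq]
    module
  rw [h2, smul_add, smul_smul, smul_smul] at h0
  -- extract coordinate equations
  have hA : -α * (s * s - β * (r * r)) = q * q - β * (p * p) := by
    have h' := congrArg (fun z => (w.repr z) 2) h0
    simp only [map_add, map_smul, Module.Basis.repr_self, Finsupp.smul_single,
      Finsupp.add_apply, Finsupp.single_apply] at h'
    simpa using h'
  have hB0 : -α * (r * s + s * r) = q * p + p * q := by
    have h' := congrArg (fun z => (w.repr z) 3) h0
    simp only [map_add, map_smul, Module.Basis.repr_self, Finsupp.smul_single,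
      Finsupp.add_apply, Finsupp.single_apply] at h'
    simpa using h'
  have hB : p * q = -(α * (r * s)) := by
    have h2' : 2 * (p * q + α * (r * s)) = 0 := by linear_combination -hB0
    have h3' := (mul_eq_zero.mp h2').resolve_left hchar
    linear_combination h3'
  -- determinant of e w.r.t. bases v, w is nonzero
  have hM : IsUnit (LinearMap.toMatrix v w e.toLinearMap).det := e.isUnit_det v w
  have hdet : (LinearMap.toMatrix v w e.toLinearMap).det =
      (p * s - q * r) * ((s * s - β * (r * r)) * (p * s + q * r) -
        (r * s + s * r) * (q * s - β * (p * r))) := by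
    have entry : ∀ i j, LinearMap.toMatrix v w e.toLinearMap i j = w.repr (e (v j)) i := by
      intro i j
      rw [LinearMap.toMatrix_apply]
      rfl
    have c0 : ∀ i, w.repr (e (v 2)) i =
        ![0, 0, s * s - β * (r * r), r * s + s * r] i := by
      intro i; rw [h2]; fin_cases i <;> simp [Finsupp.single_apply]
    have c1 : ∀ i, w.repr (e (v 3)) i =
        ![0, 0, q * s - β * (p * r), p * s + q * r] i := by
      intro i; rw [h3]; fin_cases i <;> simp [Finsupp.single_apply]
    have hMeq : LinearMap.toMatrix v w e.toLinearMap =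
        !![p, r, 0, 0;
           q, s, 0, 0;
           w.repr (e (v 0)) 2, w.repr (e (v 1)) 2, s * s - β * (r * r), q * s - β * (p * r);
           w.repr (e (v 0)) 3, w.repr (e (v 1)) 3, r * s + s * r, p * s + q * r] := by
      ext i j
      fin_cases i <;> fin_cases j <;>
        simp [entry, c0, c1, ← hp, ← hq, ← hr, ← hs]
    rw [hMeq, det4]
    ring
  rw [hdet] at hM
  have hne := hM.ne_zero
  have hN1 : p * s - q * r ≠ 0 := left_ne_zero_of_mul hne
  have hN2 : (s * s - β * (r * r)) * (p * s + q * r) -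
      (r * s + s * r) * (q * s - β * (p * r)) ≠ 0 := right_ne_zero_of_mul hne
  -- s² + βr² ≠ 0
  have hS : s * s + β * (r * r) ≠ 0 := by
    intro h
    apply hN2
    linear_combination (p * s - q * r) * h
  -- (ps - qr)² = (p² + αr²)(s² + βr²)
  have hI2 : (p * s - q * r) ^ 2 = (p * p + α * (r * r)) * (s * s + β * (r * r)) := by
    linear_combination (-(r * r)) * hA + (-2 * r * s) * hB
  have hP : p * p + α * (r * r) ≠ 0 := by
    intro h
    apply hN1
    have : (p * s - q * r) ^ 2 = 0 := by rw [hI2, h, zero_mul]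
    exact pow_eq_zero_iff (n := 2) (by norm_num) |>.mp this
  -- αs² = βp²
  have hKey : α * (s * s) = β * (p * p) := by
    have h3 : (p * p + α * (r * r)) * (α * (s * s) - β * (p * p)) = 0 := by
      linear_combination (-(p * p)) * hA + (-(p * q) + α * (r * s)) * hB
    have := (mul_eq_zero.mp h3).resolve_left hP
    linear_combination this
  by_cases hb : β = 0
  · refine ⟨1, one_ne_zero, ?_⟩
    subst hb
    have hs0 : s ≠ 0 := by
      intro h; apply hS; rw [h]; ring
    have : α * (s * s) = 0 := by rw [hKey]; ring
    rcases mul_eq_zero.mp this with h | h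
    · rw [h]; ring
    · exact absurd (mul_self_eq_zero.mp h) hs0
  · by_cases ha : α = 0
    · exfalso
      subst ha
      rw [neg_zero, zero_mul] at hA
      have hpq : p * q = 0 := by linear_combination hB
      rcases mul_eq_zero.mp hpq with h | h
      · have : q * q = 0 := by rw [h] at hA; linear_combination -hA
        have hq0 : q = 0 := mul_self_eq_zero.mp this
        exact hN1 (by rw [h, hq0]; ring)
      · have : β * (p * p) = 0 := by rw [h] at hA; linear_combination hA
        have hp0 : p = 0 := by
          rcases mul_eq_zero.mp this with h' | h'
          · exact absurd h' hb
          · exact mul_self_eq_zero.mp h'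
        exact hN1 (by rw [h, hp0]; ring)
    · by_cases hs0 : s = 0
      · -- then p = 0, r ≠ 0, q ≠ 0, α β r² = q²
        have hp0 : p = 0 := by
          have : β * (p * p) = 0 := by rw [← hKey, hs0]; ring
          rcases mul_eq_zero.mp this with h' | h'
          · exact absurd h' hb
          · exact mul_self_eq_zero.mp h'
        have hr0 : r ≠ 0 := by
          intro h; apply hS; rw [hs0, h]; ring
        have hq0 : q ≠ 0 := by
          intro h; apply hN1; rw [hp0, hs0, h]; ring
        refine ⟨q / (β * r), div_ne_zero hq0 (mul_ne_zero hb hr0), ?_⟩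
        have hq2 : q * q = α * β * (r * r) := by
          rw [hp0, hs0] at hA
          linear_combination -hA
        field_simp
        linear_combination -hq2
      · have hp0 : p ≠ 0 := by
          intro h
          apply ha
          have : α * (s * s) = 0 := by rw [hKey, h]; ring
          rcases mul_eq_zero.mp this with h' | h'
          · exact h'
          · exact absurd (mul_self_eq_zero.mp h') hs0
        refine ⟨p / s, div_ne_zero hp0 hs0, ?_⟩
        field_simp
        linear_combination hKey

lemma back {F A B : Type*} [Field F]
    [NonUnitalRing A] [Module F A] [SMulCommClass F A A] [IsScalarTower F A A]
    [NonUnitalRing B] [Module F B] [SMulCommClass F B B] [IsScalarTower F B B]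
    (α β : F) (v : Module.Basis (Fin 4) F A) (w : Module.Basis (Fin 4) F B)
    (hv : IsA45Basis α v) (hw : IsA45Basis β w)
    (ε : F) (hε : ε ≠ 0) (hab : α = ε ^ 2 * β) :
    ∃ e : A ≃ₗ[F] B, ∀ x y : A, e (x * y) = e x * e y := by
  set f : A →ₗ[F] B := v.constr F ![ε • w 0, w 1, w 2, ε • w 3] with hf
  set g : B →ₗ[F] A := w.constr F ![ε⁻¹ • v 0, v 1, v 2, ε⁻¹ • v 3] with hg
  have hfv : ∀ i, f (v i) = ![ε • w 0, w 1, w 2, ε • w 3] i := fun i => v.constr_basis F _ i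
  have hgw : ∀ i, g (w i) = ![ε⁻¹ • v 0, v 1, v 2, ε⁻¹ • v 3] i := fun i => w.constr_basis F _ i
  have hfg : f.comp g = LinearMap.id := by
    apply w.ext
    intro i
    fin_cases i <;>
      simp [hfv, hgw, smul_smul, mul_inv_cancel₀ hε, inv_mul_cancel₀ hε]
  have hgf : g.comp f = LinearMap.id := by
    apply v.ext
    intro i
    fin_cases i <;>
      simp [hfv, hgw, smul_smul, mul_inv_cancel₀ hε, inv_mul_cancel₀ hε]
  refine ⟨LinearEquiv.ofLinear f g hfg hgf, ?_⟩
  intro x y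
  show f (x * y) = f x * f y
  have hfx : ∀ x : A, f x = (ε * v.repr x 0) • w 0 + (v.repr x 1) • w 1 +
      (v.repr x 2) • w 2 + (ε * v.repr x 3) • w 3 := by
    intro x
    conv_lhs => rw [← v.sum_repr x]
    rw [map_sum, Fin.sum_univ_four]
    simp only [map_smul, hfv, Matrix.cons_val_zero, Matrix.cons_val_one,
      Matrix.head_cons, Matrix.cons_val_two, Matrix.cons_val_three, Matrix.tail_cons]
    module
  have hr : ∀ (x : A) (i : Fin 4), w.repr (f x) i =
      ![ε * v.repr x 0, v.repr x 1, v.repr x 2, ε * v.repr x 3] i := by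
    intro x i
    rw [hfx x]
    fin_cases i <;> simp [Finsupp.single_apply]
  rw [key_expand β w hw (f x) (f y), key_expand α v hv x y]
  rw [map_add, map_smul, map_smul, hr, hr, hr, hr]
  simp only [Matrix.cons_val_zero, Matrix.cons_val_one, Matrix.head_cons]
  have h2 : f (v 2) = w 2 := by rw [hfv]; rfl
  have h3 : f (v 3) = ε • w 3 := by rw [hfv]; rfl
  rw [h2, h3, hab]
  module

/-- Over a field of characteristic `≠ 2`, the algebras `A_{4,5}^α` and `A_{4,5}^β` are
isomorphic if and only if there exists `ε ∈ F`, `ε ≠ 0`, with `α = ε²β`. -/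
theorem stmt14 {F A B : Type*} [Field F] (hchar : (2 : F) ≠ 0)
    [NonUnitalRing A] [Module F A] [SMulCommClass F A A] [IsScalarTower F A A]
    [NonUnitalRing B] [Module F B] [SMulCommClass F B B] [IsScalarTower F B B]
    (α β : F)
    (v : Module.Basis (Fin 4) F A) (w : Module.Basis (Fin 4) F B)
    (hv : IsA45Basis α v) (hw : IsA45Basis β w) :
    (∃ e : A ≃ₗ[F] B, ∀ x y : A, e (x * y) = e x * e y) ↔
      ∃ ε : F, ε ≠ 0 ∧ α = ε ^ 2 * β := by
  constructor
  · rintro ⟨e, he⟩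
    exact fwd hchar α β v w hv hw e he
  · rintro ⟨ε, hε, hab⟩
    exact back α β v w hv hw ε hε hab
end
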